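/- Let T ∈ k(x)^{n×n}, θ = ∂_x + T, a ∈ k[x]^n, and ρ = dim_{k(x)} span(θ^i a : i ≥ 0). With den the least common denominator of T, d = deg den, D = deg(den·T), D̃ = max(d−1,D), d_a = deg a, there exists a nonzero tuple (η_0,…,η_ρ) ∈ k[x]^{ρ+1} with Σ_{i=0}^ρ η_i · θ^i a = 0 and each η_i of the form den^i · p_i with p_i ∈ k[x] of degree at most ρ d_a + (ρ(ρ+1)/2 − i)·D̃. -/

import Mathlib

set_option synthInstance.maxHeartbeats 800000
set_option maxHeartbeats 3200000

open Polynomial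

/-- The standard derivative on the rational function field `k(x)`. -/
noncomputable def ratDeriv {k : Type*} [Field k] (f : RatFunc k) : RatFunc k :=
  algebraMap (Polynomial k) (RatFunc k)
      (derivative f.num * f.denom - f.num * derivative f.denom) /
    (algebraMap (Polynomial k) (RatFunc k) f.denom) ^ 2

/-- The pseudo-linear map `θ = ∂_x + T` on `k(x)^n`. -/
noncomputable def pseudoLin {k : Type*} [Field k] {n : ℕ}
    (T : Matrix (Fin n) (Fin n) (RatFunc k)) (v : Fin n → RatFunc k) : Fin n → RatFunc k :=
  (fun i => ratDeriv (v i)) + T.mulVec v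

theorem aux_ratDeriv_div {k : Type*} [Field k] (p q : Polynomial k) (hq : q ≠ 0) :
    ratDeriv (algebraMap (Polynomial k) (RatFunc k) p / algebraMap (Polynomial k) (RatFunc k) q)
      = algebraMap (Polynomial k) (RatFunc k) (derivative p * q - p * derivative q) /
        algebraMap (Polynomial k) (RatFunc k) (q ^ 2) := by
  set f := algebraMap (Polynomial k) (RatFunc k) p / algebraMap (Polynomial k) (RatFunc k) q with hf
  have inj : Function.Injective (algebraMap (Polynomial k) (RatFunc k)) :=
    IsFractionRing.injective _ _
  have hdq : algebraMap (Polynomial k) (RatFunc k) q ≠ 0 :=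
    (map_ne_zero_iff _ inj).mpr hq
  have hdenom : algebraMap (Polynomial k) (RatFunc k) f.denom ≠ 0 :=
    (map_ne_zero_iff _ inj).mpr (RatFunc.denom_ne_zero f)
  have hnd := RatFunc.num_div_denom f
  rw [hf, div_eq_div_iff hdenom hdq] at hnd
  have h1 : f.num * q = p * f.denom := by
    apply inj; rw [map_mul, map_mul]; exact hnd
  have h2 : derivative f.num * q + f.num * derivative q
      = derivative p * f.denom + p * derivative f.denom := by
    have := congrArg derivative h1
    simpa [derivative_mul] using this
  show ratDeriv f = _
  unfold ratDeriv
  rw [← map_pow, div_eq_div_iff ((map_ne_zero_iff _ inj).mpr (pow_ne_zero 2 (RatFunc.denom_ne_zero f)))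
    ((map_ne_zero_iff _ inj).mpr (pow_ne_zero 2 hq)), ← map_mul, ← map_mul]
  apply congrArg
  linear_combination (f.denom * q) * h2 - (derivative f.denom * q + derivative q * f.denom) * h1

theorem aux_exists_rows_det_ne_zero {K : Type*} [Field K] :
    ∀ (m n : ℕ) (w : Fin m → Fin n → K), LinearIndependent K w →
      ∃ e : Fin m → Fin n, (Matrix.of fun i j => w j (e i)).det ≠ 0 := by
  intro m
  induction m with
  | zero =>
    intro n w _
    refine ⟨fun i => i.elim0, by simp [Matrix.det_fin_zero]⟩
  | succ m ih =>
    intro n w hw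
    obtain ⟨e, he⟩ := ih n (fun j => w j.succ) (hw.comp Fin.succ (Fin.succ_injective m))
    set c : Fin (m + 1) → K := fun j =>
      (-1) ^ (j : ℕ) * (Matrix.of fun i j' => w (j.succAbove j') (e i)).det with hc
    have hc0 : c 0 ≠ 0 := by
      simpa [hc, Fin.succAbove_zero] using he
    have hu : ∃ t : Fin n, (∑ j, c j * w j t) ≠ 0 := by
      by_contra h
      push_neg at h
      have : ∑ j, c j • w j = 0 := by
        funext t
        simpa [Finset.sum_apply] using h t
      exact hc0 (Fintype.linearIndependent_iff.mp hw c this 0)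
    obtain ⟨t, ht⟩ := hu
    set e' : Fin (m + 1) → Fin n := Fin.cons t e with he'
    refine ⟨e', ?_⟩
    rw [Matrix.det_succ_row_zero]
    convert ht using 1
    refine Finset.sum_congr rfl fun j _ => ?_
    have hm : ((Matrix.of fun i j => w j (e' i)).submatrix Fin.succ j.succAbove)
        = (Matrix.of fun i j' => w (j.succAbove j') (e i)) := by
      ext i j'; simp [he']
    rw [hm]
    simp only [Matrix.of_apply, he', Fin.cons_zero, hc]
    ring

theorem aux_natDegree_det_le {k : Type*} [CommRing k] {m : ℕ}
    (A : Matrix (Fin m) (Fin m) (Polynomial k)) (c : Fin m → ℕ)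
    (h : ∀ i j, (A i j).natDegree ≤ c j) : A.det.natDegree ≤ ∑ j, c j := by
  rw [Matrix.det_apply]
  refine natDegree_sum_le_of_forall_le _ _ fun σ _ => ?_
  rw [Units.smul_def, zsmul_eq_mul]
  refine (natDegree_mul_le).trans ?_
  rw [natDegree_intCast, zero_add]
  refine (natDegree_prod_le _ _).trans ?_
  exact Finset.sum_le_sum fun j _ => h (σ j) j

theorem aux_exists_poly_kernel {k : Type*} [Field k] :
    ∀ (m n : ℕ) (M : Matrix (Fin n) (Fin m) (Polynomial k)) (c : Fin m → ℕ),
      (∀ s j, (M s j).natDegree ≤ c j) →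
      ¬ LinearIndependent (RatFunc k)
        (fun j : Fin m => fun s : Fin n => algebraMap (Polynomial k) (RatFunc k) (M s j)) →
      ∃ q : Fin m → Polynomial k, q ≠ 0 ∧ (∀ s, ∑ j, q j * M s j = 0) ∧
        ∀ j, (q j).natDegree ≤ (∑ j', c j') - c j := by
  intro m
  have inj : Function.Injective (algebraMap (Polynomial k) (RatFunc k)) :=
    IsFractionRing.injective _ _
  induction m with
  | zero =>
    intro n M c _ hdep
    exact absurd linearIndependent_empty_type hdep
  | succ m ih =>
    intro n M c hdeg hdep
    by_cases hind : LinearIndependent (RatFunc k)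
        (fun j : Fin m => fun s : Fin n => algebraMap (Polynomial k) (RatFunc k) (M s j.succ))
    · -- last m columns independent; Cramer construction
      obtain ⟨e, he⟩ := aux_exists_rows_det_ne_zero m n
        (fun j s => algebraMap (Polynomial k) (RatFunc k) (M s j.succ)) hind
      set q : Fin (m + 1) → Polynomial k := fun j =>
        (-1) ^ (j : ℕ) * (Matrix.of fun i j' => M (e i) (j.succAbove j')).det with hqdef
      have hmapdet : ∀ j : Fin (m + 1),
          algebraMap (Polynomial k) (RatFunc k)
            ((Matrix.of fun i j' => M (e i) (j.succAbove j')).det)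
          = (Matrix.of fun i j' =>
              algebraMap (Polynomial k) (RatFunc k) (M (e i) (j.succAbove j'))).det := by
        intro j
        rw [RingHom.map_det]
        rfl
      have hq0 : q 0 ≠ 0 := by
        simp only [hqdef, Fin.val_zero, pow_zero, one_mul]
        intro h0
        apply he
        have h1 : (Matrix.of fun i j' => algebraMap (Polynomial k) (RatFunc k)
            (M (e i) ((0 : Fin (m+1)).succAbove j'))).det = 0 := by
          rw [← hmapdet 0, h0, map_zero]
        rw [← h1]
        rfl
      obtain ⟨x, hxsum, j0, hxj0⟩ := Fintype.not_linearIndependent_iff.mp hdep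
      have hrel : ∀ s, ∑ j, q j * M s j = 0 := by
        intro s
        set e' : Fin (m + 1) → Fin n := Fin.cons s e with he'
        set B : Matrix (Fin (m + 1)) (Fin (m + 1)) (Polynomial k) :=
          Matrix.of fun i j => M (e' i) j with hB
        have hdetB : B.det = 0 := by
          apply inj
          rw [map_zero, RingHom.map_det]
          rw [← Matrix.exists_mulVec_eq_zero_iff]
          refine ⟨x, fun h => hxj0 (congrFun h j0), ?_⟩
          funext i
          have hx : ∑ j, x j * algebraMap (Polynomial k) (RatFunc k) (M (e' i) j) = 0 := by
            have hcf := congrFun hxsum (e' i)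
            simpa using hcf
          simp only [Matrix.mulVec, dotProduct, Matrix.map_apply, hB, Matrix.of_apply,
            Pi.zero_apply]
          rw [← hx]
          exact Finset.sum_congr rfl fun j _ => mul_comm _ _
        have hexp := Matrix.det_succ_row_zero B
        rw [hdetB] at hexp
        have hstep : ∑ j, q j * M s j =
            ∑ j : Fin (m+1), (-1) ^ (j:ℕ) * B 0 j * (B.submatrix Fin.succ j.succAbove).det := by
          refine Finset.sum_congr rfl fun j _ => ?_
          have hsub : B.submatrix Fin.succ j.succAbove
              = Matrix.of fun i j' => M (e i) (j.succAbove j') := by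
            ext i j'
            simp [hB, he']
          rw [hsub]
          have hB0 : B 0 j = M s j := by simp [hB, he']
          rw [hB0, hqdef]
          ring
        rw [hstep]
        exact hexp.symm
      refine ⟨q, fun h => hq0 (congrFun h 0), hrel, ?_⟩
      intro j
      have hd : ((Matrix.of fun i j' => M (e i) (j.succAbove j')).det).natDegree
          ≤ ∑ j' : Fin m, c (j.succAbove j') :=
        aux_natDegree_det_le _ _ fun i j' => hdeg (e i) (j.succAbove j')
      have hsum : ∑ j' : Fin (m+1), c j' = c j + ∑ j' : Fin m, c (j.succAbove j') :=
        Fin.sum_univ_succAbove c j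
      have hqj : (q j).natDegree ≤ ∑ j' : Fin m, c (j.succAbove j') := by
        rw [hqdef]
        refine natDegree_mul_le.trans ?_
        have h1 : (((-1 : Polynomial k)) ^ (j:ℕ)).natDegree = 0 := by
          simp
        rw [h1, zero_add]
        exact hd
      omega
    · -- drop the first column, use induction hypothesis
      obtain ⟨q', hq'0, hrel', hbd'⟩ := ih n (M.submatrix id Fin.succ) (c ∘ Fin.succ)
        (fun s j => hdeg s j.succ) hind
      refine ⟨Fin.cons 0 q', ?_, ?_, ?_⟩
      · intro h
        apply hq'0
        funext j
        have := congrFun h j.succ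
        simpa using this
      · intro s
        rw [Fin.sum_univ_succ]
        simpa using hrel' s
      · intro j
        induction j using Fin.cases with
        | zero => simp
        | succ j' =>
          have hb := hbd' j'
          have hsum : ∑ j'' : Fin (m+1), c j'' = c 0 + ∑ j'' : Fin m, c j''.succ :=
            Fin.sum_univ_succ c
          simp only [Fin.cons_succ]
          simp only [Function.comp] at hb
          omega

noncomputable def bvec {k : Type*} [Field k] {n : ℕ} (den : Polynomial k)
    (N : Matrix (Fin n) (Fin n) (Polynomial k)) (a : Fin n → Polynomial k) :
    ℕ → Fin n → Polynomial k
  | 0 => a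
  | i + 1 => fun s => den * derivative (bvec den N a i s)
      - (i : Polynomial k) * derivative den * bvec den N a i s
      + ∑ j, N s j * bvec den N a i j

theorem aux_bvec_spec {k : Type*} [Field k] {n : ℕ}
    (T : Matrix (Fin n) (Fin n) (RatFunc k)) (den : Polynomial k) (hden : den ≠ 0)
    (N : Matrix (Fin n) (Fin n) (Polynomial k))
    (hTN : ∀ i j, T i j = algebraMap (Polynomial k) (RatFunc k) (N i j) /
      algebraMap (Polynomial k) (RatFunc k) den)
    (a : Fin n → Polynomial k) :
    ∀ i s, (pseudoLin T)^[i] (fun s => algebraMap (Polynomial k) (RatFunc k) (a s)) s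
      = algebraMap (Polynomial k) (RatFunc k) (bvec den N a i s) /
        algebraMap (Polynomial k) (RatFunc k) (den ^ i) := by
  have inj : Function.Injective (algebraMap (Polynomial k) (RatFunc k)) :=
    IsFractionRing.injective _ _
  have hmne : ∀ r : Polynomial k, r ≠ 0 → algebraMap (Polynomial k) (RatFunc k) r ≠ 0 :=
    fun r hr => (map_ne_zero_iff _ inj).mpr hr
  intro i
  induction i with
  | zero =>
    intro s
    simp [bvec]
  | succ i ih =>
    intro s
    rw [Function.iterate_succ_apply']
    have hps : pseudoLin T ((pseudoLin T)^[i] fun s => algebraMap (Polynomial k) (RatFunc k) (a s)) s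
        = ratDeriv ((pseudoLin T)^[i] (fun s => algebraMap (Polynomial k) (RatFunc k) (a s)) s)
          + ∑ j, T s j * (pseudoLin T)^[i] (fun s => algebraMap (Polynomial k) (RatFunc k) (a s)) j := by
      rfl
    rw [hps]
    set b : Fin n → Polynomial k := bvec den N a i with hb
    have hrd : ratDeriv ((pseudoLin T)^[i] (fun s => algebraMap (Polynomial k) (RatFunc k) (a s)) s)
        = algebraMap (Polynomial k) (RatFunc k)
            (derivative (b s) * den ^ i - b s * derivative (den ^ i)) /
          algebraMap (Polynomial k) (RatFunc k) ((den ^ i) ^ 2) := by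
      rw [ih s]
      exact aux_ratDeriv_div _ _ (pow_ne_zero i hden)
    have hkey : algebraMap (Polynomial k) (RatFunc k)
            (derivative (b s) * den ^ i - b s * derivative (den ^ i)) /
          algebraMap (Polynomial k) (RatFunc k) ((den ^ i) ^ 2)
        = algebraMap (Polynomial k) (RatFunc k)
            (den * derivative (b s) - (i : Polynomial k) * derivative den * b s) /
          algebraMap (Polynomial k) (RatFunc k) (den ^ (i + 1)) := by
      rw [div_eq_div_iff (hmne _ (pow_ne_zero 2 (pow_ne_zero i hden)))
        (hmne _ (pow_ne_zero (i+1) hden)), ← map_mul, ← map_mul]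
      congr 1
      rw [derivative_pow, C_eq_natCast]
      cases i with
      | zero => simp; ring
      | succ j =>
        simp only [Nat.add_sub_cancel]
        push_cast
        ring
    have hsum : ∑ j, T s j * (pseudoLin T)^[i] (fun s => algebraMap (Polynomial k) (RatFunc k) (a s)) j
        = algebraMap (Polynomial k) (RatFunc k) (∑ j, N s j * b j) /
          algebraMap (Polynomial k) (RatFunc k) (den ^ (i + 1)) := by
      rw [map_sum, Finset.sum_div]
      refine Finset.sum_congr rfl fun j _ => ?_
      rw [hTN s j, ih j, div_mul_div_comm, ← map_mul, ← map_mul, pow_succ']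
    rw [hrd, hkey, hsum, ← add_div, ← map_add]
    rfl

theorem aux_bvec_deg {k : Type*} [Field k] {n : ℕ} (den : Polynomial k)
    (N : Matrix (Fin n) (Fin n) (Polynomial k)) (a : Fin n → Polynomial k)
    (da D : ℕ) (hda : ∀ s, (a s).natDegree ≤ da) (hD : ∀ i j, (N i j).natDegree ≤ D) :
    ∀ i s, (bvec den N a i s).natDegree ≤ da + i * max (den.natDegree - 1) D := by
  set Dt := max (den.natDegree - 1) D with hDt
  have hd1 : den.natDegree - 1 ≤ Dt := le_max_left _ _
  have hD2 : D ≤ Dt := le_max_right _ _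
  intro i
  induction i with
  | zero => intro s; simpa [bvec] using hda s
  | succ i ih =>
    intro s
    show (den * derivative (bvec den N a i s)
      - (i : Polynomial k) * derivative den * bvec den N a i s
      + ∑ j, N s j * bvec den N a i j).natDegree ≤ da + (i + 1) * Dt
    set m := da + i * Dt with hm
    have hgoal : da + (i + 1) * Dt = m + Dt := by rw [hm]; ring
    rw [hgoal]
    have h1 : (den * derivative (bvec den N a i s)).natDegree ≤ m + Dt := by
      by_cases hz : derivative (bvec den N a i s) = 0
      · rw [hz, mul_zero]; simp
      · have hb1 : 1 ≤ (bvec den N a i s).natDegree := by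
          by_contra h
          push_neg at h
          have h0 : (bvec den N a i s).natDegree = 0 := by omega
          exact hz (by rw [eq_C_of_natDegree_eq_zero h0]; simp)
        refine natDegree_mul_le.trans ?_
        have := natDegree_derivative_le (bvec den N a i s)
        have := ih s
        omega
    have h2 : ((i : Polynomial k) * derivative den * bvec den N a i s).natDegree ≤ m + Dt := by
      refine natDegree_mul_le.trans ?_
      have hi : ((i : Polynomial k) * derivative den).natDegree ≤ Dt := by
        refine natDegree_mul_le.trans ?_
        have := natDegree_derivative_le den
        rw [natDegree_natCast]
        omega
      have := ih s
      omega
    have h3 : (∑ j, N s j * bvec den N a i j).natDegree ≤ m + Dt := by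
      refine natDegree_sum_le_of_forall_le _ _ fun j _ => ?_
      refine natDegree_mul_le.trans ?_
      have := ih j
      have := hD s j
      omega
    refine (natDegree_add_le _ _).trans ?_
    refine max_le ((natDegree_sub_le _ _).trans (max_le h1 h2)) h3

/-- Direct Cramer-rule bound: with `ρ = dim span(θ^i a)`, `den` the least common denominator
of `T`, `d = deg den`, `D = deg (den·T)`, `D̃ = max(d-1, D)`, `d_a = deg a`, there is a nonzero
tuple `(η_0, …, η_ρ)` with `∑ η_i θ^i a = 0`, where `η_i = den^i · p_i` and
`deg p_i ≤ ρ d_a + (ρ(ρ+1)/2 - i) D̃`. -/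
theorem exists_relation_cramer_bound (k : Type*) [Field k] [CharZero k] (n : ℕ)
    (T : Matrix (Fin n) (Fin n) (RatFunc k))
    (den : Polynomial k) (hden : den ≠ 0)
    (N : Matrix (Fin n) (Fin n) (Polynomial k))
    (hTN : ∀ i j, T i j = algebraMap (Polynomial k) (RatFunc k) (N i j) /
      algebraMap (Polynomial k) (RatFunc k) den)
    (a : Fin n → Polynomial k) (da D : ℕ)
    (hda : ∀ idx, (a idx).natDegree ≤ da)
    (hD : ∀ i j, (N i j).natDegree ≤ D)
    (ρ : ℕ)
    (hρ : ρ = Module.finrank (RatFunc k) (Submodule.span (RatFunc k)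
      (Set.range fun i : ℕ =>
        (pseudoLin T)^[i] (fun s => algebraMap (Polynomial k) (RatFunc k) (a s))))) :
    ∃ η : Fin (ρ + 1) → Polynomial k, η ≠ 0 ∧
      (∑ i : Fin (ρ + 1), algebraMap (Polynomial k) (RatFunc k) (η i) •
        (pseudoLin T)^[(i : ℕ)] (fun s => algebraMap (Polynomial k) (RatFunc k) (a s))) = 0 ∧
      ∀ i : Fin (ρ + 1), ∃ p : Polynomial k, η i = den ^ (i : ℕ) * p ∧
        p.natDegree ≤ ρ * da + (ρ * (ρ + 1) / 2 - (i : ℕ)) * max (den.natDegree - 1) D := by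
  have inj : Function.Injective (algebraMap (Polynomial k) (RatFunc k)) :=
    IsFractionRing.injective _ _
  have hmne : ∀ r : Polynomial k, r ≠ 0 → algebraMap (Polynomial k) (RatFunc k) r ≠ 0 :=
    fun r hr => (map_ne_zero_iff _ inj).mpr hr
  set Dt := max (den.natDegree - 1) D with hDt
  set av : Fin n → RatFunc k := fun s => algebraMap (Polynomial k) (RatFunc k) (a s) with hav
  set M : Matrix (Fin n) (Fin (ρ + 1)) (Polynomial k) :=
    Matrix.of fun s (j : Fin (ρ + 1)) => bvec den N a (j : ℕ) s with hM
  set c : Fin (ρ + 1) → ℕ := fun j => da + (j : ℕ) * Dt with hc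
  have hdeg : ∀ s j, (M s j).natDegree ≤ c j := fun s j =>
    aux_bvec_deg den N a da D hda hD (j : ℕ) s
  have hspec := aux_bvec_spec T den hden N hTN a
  -- the columns of M, viewed in k(x)^n, lie in the span of the iterates
  have hcol : ∀ j : Fin (ρ + 1),
      (fun s => algebraMap (Polynomial k) (RatFunc k) (M s j))
        = algebraMap (Polynomial k) (RatFunc k) (den ^ (j : ℕ)) • (pseudoLin T)^[(j : ℕ)] av := by
    intro j
    funext s
    rw [Pi.smul_apply, smul_eq_mul, hspec (j : ℕ) s,
      mul_div_cancel₀ _ (hmne _ (pow_ne_zero _ hden))]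
    rfl
  have hdep : ¬ LinearIndependent (RatFunc k)
      (fun j : Fin (ρ + 1) => fun s : Fin n => algebraMap (Polynomial k) (RatFunc k) (M s j)) := by
    intro hli
    set S := Submodule.span (RatFunc k) (Set.range fun i : ℕ => (pseudoLin T)^[i] av) with hS
    have hmem : ∀ j : Fin (ρ + 1),
        (fun s => algebraMap (Polynomial k) (RatFunc k) (M s j)) ∈ S := by
      intro j
      rw [hcol j]
      exact Submodule.smul_mem _ _ (Submodule.subset_span ⟨(j : ℕ), rfl⟩)
    set v : Fin (ρ + 1) → S := fun j => ⟨_, hmem j⟩ with hv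
    have hvli : LinearIndependent (RatFunc k) v := by
      apply LinearIndependent.of_comp S.subtype
      exact hli
    have hcard := hvli.fintype_card_le_finrank
    simp only [Fintype.card_fin] at hcard
    omega
  obtain ⟨q, hq0, hrel, hbd⟩ := aux_exists_poly_kernel (ρ + 1) n M c hdeg hdep
  refine ⟨fun j => den ^ (j : ℕ) * q j, ?_, ?_, ?_⟩
  · intro h
    apply hq0
    funext j
    have := congrFun h j
    simp only [Pi.zero_apply] at this ⊢
    exact (mul_eq_zero.mp this).resolve_left (pow_ne_zero _ hden)
  · funext s
    rw [Finset.sum_apply]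
    have : ∀ j : Fin (ρ + 1),
        (algebraMap (Polynomial k) (RatFunc k) (den ^ (j : ℕ) * q j) • (pseudoLin T)^[(j : ℕ)] av) s
          = algebraMap (Polynomial k) (RatFunc k) (q j * M s j) := by
      intro j
      rw [Pi.smul_apply, smul_eq_mul, hspec (j : ℕ) s, map_mul, map_mul]
      rw [mul_comm (algebraMap (Polynomial k) (RatFunc k) (den ^ (j:ℕ))) _, mul_assoc,
        mul_div_cancel₀ _ (hmne _ (pow_ne_zero _ hden))]
      rfl
    rw [Finset.sum_congr rfl fun j _ => this j, ← map_sum, hrel s, map_zero]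
    rfl
  · intro j
    refine ⟨q j, rfl, ?_⟩
    have hb := hbd j
    have hsumc : ∑ j' : Fin (ρ + 1), c j'
        = (ρ + 1) * da + (∑ j' : Fin (ρ + 1), (j' : ℕ)) * Dt := by
      rw [hc]
      rw [Finset.sum_add_distrib, Finset.sum_const, Finset.card_univ, Fintype.card_fin,
        ← Finset.sum_mul]
      simp [mul_comm]
    have hG : (∑ j' : Fin (ρ + 1), (j' : ℕ)) * 2 = (ρ + 1) * ρ := by
      rw [Fin.sum_univ_eq_sum_range (fun i => i)]
      exact Finset.sum_range_id_mul_two (ρ + 1)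
    set G := ∑ j' : Fin (ρ + 1), (j' : ℕ) with hGdef
    have hρG : ρ ≤ G := by
      have hsingle := Finset.single_le_sum (f := fun j' : Fin (ρ + 1) => (j' : ℕ))
        (fun _ _ => Nat.zero_le _) (Finset.mem_univ (Fin.last ρ))
      simpa using hsingle
    have hjG : (j : ℕ) ≤ G := le_trans (Nat.lt_succ_iff.mp j.isLt) hρG
    have hsplit : (G - (j : ℕ)) * Dt = G * Dt - (j : ℕ) * Dt := Nat.sub_mul _ _ _
    have hmono : (j : ℕ) * Dt ≤ G * Dt := Nat.mul_le_mul_right _ hjG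
    have hcj : c j = da + (j : ℕ) * Dt := rfl
    have hrw : (ρ + 1) * da = ρ * da + da := by ring
    have hfin : (∑ j' : Fin (ρ + 1), c j') - c j ≤ ρ * da + (G - (j : ℕ)) * Dt := by
      rw [hsumc, hcj, hrw]
      omega
    have h2 : G * 2 = ρ * (ρ + 1) := by rw [hG, mul_comm]
    have hGj : G - (j : ℕ) = ρ * (ρ + 1) / 2 - (j : ℕ) := by omega
    rw [← hGj]
    exact hb.trans hfin
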